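/- Consider the EDmC (min-consensus) dynamics on a connected graph. Assume the inputs u have variation bounded by Π ≥ 0, Δ is an upper bound on the diameter of G (Δ ≥ δ), and x satisfies the EDmC update with Δ + 1 levels. Then for every k ≥ Δ + 1 and every vertex i ∈ V, the top-level state tracks the minimum with error |x_k(i, Δ) − u̲_k| ≤ (Δ + 1)·Π, where u̲_k = min_{i∈V} u_k(i). -/

import Mathlib

open Finset

/-- EDmC (min-consensus) tracking error bound (Theorem 4). -/
theorem edmc_min_tracking_error
    {V : Type*} [Fintype V] [Nonempty V] [DecidableEq V]
    (G : SimpleGraph V) [DecidableRel G.Adj] (hconn : G.Connected)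
    (Pi : ℝ) (hPi : 0 ≤ Pi)
    (u : ℕ → V → ℝ)
    (hu : ∀ k i, |u (k + 1) i - u k i| ≤ Pi)
    (δ : ℕ) (hδ : δ = Finset.univ.sup fun p : V × V => G.dist p.1 p.2)
    (Δ : ℕ) (hΔ : δ ≤ Δ)
    (x : ℕ → V → Fin (Δ + 1) → ℝ)
    (hx0 : ∀ k i, x (k + 1) i 0 = u k i)
    (hx : ∀ k i (ℓ : Fin Δ), x (k + 1) i ℓ.succ =
      (insert i (G.neighborFinset i)).inf' (insert_nonempty i _)
        (fun j => x k j ℓ.castSucc)) :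
    ∀ k, Δ + 1 ≤ k → ∀ i : V,
      |x k i (Fin.last Δ) - Finset.univ.inf' univ_nonempty (u k)| ≤ ((Δ : ℝ) + 1) * Pi := by
  classical
  have hball : ∀ (i : V) (ℓ : ℕ),
      (Finset.univ.filter (fun j => G.dist i j ≤ ℓ)).Nonempty :=
    fun i ℓ => ⟨i, by simp [SimpleGraph.dist_self]⟩
  -- Key unrolling lemma
  have key : ∀ ℓ : ℕ, ∀ (h : ℓ < Δ + 1), ∀ m i,
      x (m + ℓ + 1) i ⟨ℓ, h⟩ =
        (Finset.univ.filter (fun j => G.dist i j ≤ ℓ)).inf' (hball i ℓ) (u m) := by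
    intro ℓ
    induction ℓ with
    | zero =>
      intro h m i
      have hset : (Finset.univ.filter (fun j => G.dist i j ≤ 0)) = {i} := by
        ext j
        simp only [mem_filter, mem_univ, true_and, Nat.le_zero, mem_singleton,
          hconn.dist_eq_zero_iff]
        exact eq_comm
      rw [Finset.inf'_congr (hball i 0) hset (fun a _ => rfl)]
      simp only [inf'_singleton]
      exact hx0 m i
    | succ ℓ ih =>
      intro h m i
      have hℓ : ℓ < Δ := by omega
      have hstep := hx (m + ℓ + 1) i ⟨ℓ, hℓ⟩
      have hfin : (⟨ℓ + 1, h⟩ : Fin (Δ + 1)) = (⟨ℓ, hℓ⟩ : Fin Δ).succ := rfl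
      have hcast : (⟨ℓ, hℓ⟩ : Fin Δ).castSucc = (⟨ℓ, by omega⟩ : Fin (Δ + 1)) := rfl
      have heq : m + (ℓ + 1) + 1 = (m + ℓ + 1) + 1 := by omega
      rw [heq, hfin, hstep]
      have hrw : ∀ j, x (m + ℓ + 1) j (⟨ℓ, hℓ⟩ : Fin Δ).castSucc =
          (Finset.univ.filter (fun j' => G.dist j j' ≤ ℓ)).inf' (hball j ℓ) (u m) := by
        intro j
        rw [hcast]
        exact ih (by omega) m j
      apply le_antisymm
      · apply Finset.le_inf'
        intro kk hkk
        simp only [mem_filter, mem_univ, true_and] at hkk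
        -- find a first step j on a shortest walk
        obtain ⟨j, hj, hjkk⟩ : ∃ j, j ∈ insert i (G.neighborFinset i) ∧ G.dist j kk ≤ ℓ := by
          by_cases hik : G.dist i kk = 0
          · refine ⟨i, Finset.mem_insert_self _ _, ?_⟩
            have : i = kk := hconn.dist_eq_zero_iff.mp hik
            subst this
            simp [SimpleGraph.dist_self]
          · obtain ⟨p, hp⟩ := SimpleGraph.exists_walk_of_dist_ne_zero hik
            cases p with
            | nil => simp [SimpleGraph.dist_self] at hik
            | cons hadj q =>
              rename_i j'
              refine ⟨j', ?_, ?_⟩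
              · exact Finset.mem_insert_of_mem ((G.mem_neighborFinset _ _).mpr hadj)
              · have h1 : G.dist _ kk ≤ q.length := SimpleGraph.dist_le q
                simp only [SimpleGraph.Walk.length_cons] at hp
                omega
        calc (insert i (G.neighborFinset i)).inf'
              (Finset.insert_nonempty i _) (fun j => x (m + ℓ + 1) j (⟨ℓ, hℓ⟩ : Fin Δ).castSucc)
            ≤ x (m + ℓ + 1) j (⟨ℓ, hℓ⟩ : Fin Δ).castSucc := Finset.inf'_le _ hj
          _ = (Finset.univ.filter (fun j' => G.dist j j' ≤ ℓ)).inf' (hball j ℓ) (u m) := hrw j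
          _ ≤ u m kk := Finset.inf'_le _ (by simp [hjkk])
      · apply Finset.le_inf'
        intro j hj
        rw [hrw j]
        apply Finset.le_inf'
        intro kk hkk
        simp only [mem_filter, mem_univ, true_and] at hkk
        have hij : G.dist i j ≤ 1 := by
          rcases Finset.mem_insert.mp hj with rfl | hj'
          · simp [SimpleGraph.dist_self]
          · have hadj : G.Adj i j := (G.mem_neighborFinset _ _).mp hj'
            have : G.dist i j ≤ (hadj.toWalk).length := SimpleGraph.dist_le _
            simpa using this
        have htri : G.dist i kk ≤ G.dist i j + G.dist j kk := hconn.dist_triangle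
        exact Finset.inf'_le _ (by simp only [mem_filter, mem_univ, true_and]; omega)
  -- Lipschitz property of the min
  have lip : ∀ n, |Finset.univ.inf' univ_nonempty (u (n + 1))
      - Finset.univ.inf' univ_nonempty (u n)| ≤ Pi := by
    intro n
    rw [abs_sub_le_iff]
    constructor
    · obtain ⟨i₀, -, h₀⟩ := Finset.exists_mem_eq_inf' univ_nonempty (u n)
      have h1 : Finset.univ.inf' univ_nonempty (u (n + 1)) ≤ u (n + 1) i₀ :=
        Finset.inf'_le _ (mem_univ _)
      have h2 := abs_le.mp (hu n i₀)
      rw [h₀]; linarith [h2.2]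
    · obtain ⟨i₀, -, h₀⟩ := Finset.exists_mem_eq_inf' univ_nonempty (u (n + 1))
      have h1 : Finset.univ.inf' univ_nonempty (u n) ≤ u n i₀ :=
        Finset.inf'_le _ (mem_univ _)
      have h2 := abs_le.mp (hu n i₀)
      rw [h₀]; linarith [h2.1]
  have lipn : ∀ (d m : ℕ), |Finset.univ.inf' univ_nonempty (u m)
      - Finset.univ.inf' univ_nonempty (u (m + d))| ≤ d * Pi := by
    intro d
    induction d with
    | zero => intro m; simp
    | succ d ihd =>
      intro m
      have h1 := ihd m
      have h2 := lip (m + d)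
      have h3 : |Finset.univ.inf' univ_nonempty (u m)
          - Finset.univ.inf' univ_nonempty (u (m + (d + 1)))|
          ≤ |Finset.univ.inf' univ_nonempty (u m)
              - Finset.univ.inf' univ_nonempty (u (m + d))|
            + |Finset.univ.inf' univ_nonempty (u (m + d + 1))
              - Finset.univ.inf' univ_nonempty (u (m + d))| := by
        rw [show m + (d + 1) = m + d + 1 from rfl]
        have habs := abs_sub_le (Finset.univ.inf' univ_nonempty (u m))
          (Finset.univ.inf' univ_nonempty (u (m + d)))
          (Finset.univ.inf' univ_nonempty (u (m + d + 1)))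
        rwa [abs_sub_comm (Finset.univ.inf' univ_nonempty (u (m + d)))] at habs
      push_cast
      calc _ ≤ _ := h3
        _ ≤ d * Pi + Pi := add_le_add h1 h2
        _ = (d + 1) * Pi := by ring
  intro k hk i
  obtain ⟨m, rfl⟩ : ∃ m, k = m + Δ + 1 := ⟨k - (Δ + 1), by omega⟩
  have hlast : (Fin.last Δ) = (⟨Δ, by omega⟩ : Fin (Δ + 1)) := rfl
  have hx1 := key Δ (by omega) m i
  have hsetu : (Finset.univ.filter (fun j => G.dist i j ≤ Δ)) = Finset.univ := by
    ext j
    simp only [mem_filter, mem_univ, true_and, iff_true]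
    have : G.dist i j ≤ δ := by
      rw [hδ]
      exact Finset.le_sup (f := fun p : V × V => G.dist p.1 p.2) (mem_univ (i, j))
    omega
  rw [hlast, hx1]
  have := lipn (Δ + 1) m
  rw [show m + (Δ + 1) = m + Δ + 1 from rfl] at this
  have hinf : (Finset.univ.filter (fun j => G.dist i j ≤ Δ)).inf' (hball i Δ) (u m)
      = Finset.univ.inf' univ_nonempty (u m) :=
    Finset.inf'_congr (hball i Δ) hsetu (fun a _ => rfl)
  rw [hinf]
  push_cast at this
  linarith [this]
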